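/- Let g : ℝᵐ → ℝ ∪ {∞} be a polyhedral function and (z̄, λ̄) ∈ gph ∂g. Then there exists r > 0 such that for all (z, λ) ∈ (gph ∂g) ∩ B_r(z̄, λ̄): (i) K_g(z,λ) ⊆ K_g(z̄,λ̄) − K_g(z̄,λ̄), and (ii) K_g(z̄,λ̄) ∩ (−K_g(z̄,λ̄)) ⊆ K_g(z,λ). -/

import Mathlib

open Filter Topology Set Metric

noncomputable section

/-- A polyhedral convex set: a finite intersection of closed half-spaces. -/
def IsPolyhedralSet {E : Type*} [AddCommGroup E] [Module ℝ E] (C : Set E) : Prop :=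
  ∃ (s : ℕ) (b : Fin s → (E →ₗ[ℝ] ℝ)) (β : Fin s → ℝ), C = {x | ∀ i, b i x ≤ β i}

/-- A polyhedral function: proper (never `⊥`, somewhere finite) with polyhedral epigraph. -/
def IsPolyhedralFn {E : Type*} [AddCommGroup E] [Module ℝ E] (g : E → EReal) : Prop :=
  (∃ z, g z ≠ ⊤) ∧ (∀ z, g z ≠ ⊥) ∧
    IsPolyhedralSet {p : E × ℝ | g p.1 ≤ (p.2 : EReal)}

/-- Tangent cone to a convex set: closure of the cone of feasible directions. -/
def tcone {E : Type*} [NormedAddCommGroup E] [NormedSpace ℝ E] (C : Set E) (x : E) : Set E :=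
  closure {w | ∃ t : ℝ, 0 < t ∧ x + t • w ∈ C}

/-- Convex subdifferential of an extended-real-valued function. -/
def subdiff {E : Type*} [NormedAddCommGroup E] [InnerProductSpace ℝ E]
    (g : E → EReal) (z : E) : Set E :=
  {v | ∀ x, g z + ((inner ℝ v (x - z) : ℝ) : EReal) ≤ g x}

/-- Subderivative: `dg(z)(w) = liminf_{t↓0, w'→w} (g(z+tw')-g(z))/t`. -/
def subderiv {E : Type*} [NormedAddCommGroup E] [NormedSpace ℝ E]
    (g : E → EReal) (z : E) (w : E) : EReal :=
  Filter.liminf (fun p : ℝ × E => (g (z + p.1 • p.2) - g z) * (((p.1)⁻¹ : ℝ) : EReal))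
    ((nhdsWithin 0 (Set.Ioi (0 : ℝ))) ×ˢ 𝓝 w)

/-- Critical cone `K_g(z,v) = {w | dg(z)(w) = ⟨v,w⟩}`. -/
def Kcone {E : Type*} [NormedAddCommGroup E] [InnerProductSpace ℝ E]
    (g : E → EReal) (z v : E) : Set E :=
  {w | subderiv g z w = ((inner ℝ v w : ℝ) : EReal)}

/-- Normal cone of convex analysis. -/
def ncone {E : Type*} [NormedAddCommGroup E] [InnerProductSpace ℝ E]
    (C : Set E) (x : E) : Set E :=
  {v | ∀ y ∈ C, (inner ℝ v (y - x) : ℝ) ≤ 0}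

/-- A set is a linear subspace. -/
def IsLinSubspace {E : Type*} [AddCommGroup E] [Module ℝ E] (K : Set E) : Prop :=
  ∃ S : Submodule ℝ E, K = ↑S

/-- Polar cone. -/
def polarCone {E : Type*} [NormedAddCommGroup E] [InnerProductSpace ℝ E] (K : Set E) : Set E :=
  {u | ∀ w ∈ K, (inner ℝ u w : ℝ) ≤ 0}

/-- Fenchel conjugate. -/
def fconj {E : Type*} [NormedAddCommGroup E] [InnerProductSpace ℝ E]
    (g : E → EReal) (v : E) : EReal :=
  ⨆ z, ((inner ℝ v z : ℝ) : EReal) - g z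

/-- Bouligand (contingent) tangent cone, via sequences. -/
def btcone {E : Type*} [NormedAddCommGroup E] [NormedSpace ℝ E] (Ω : Set E) (x : E) : Set E :=
  {w | ∃ (t : ℕ → ℝ) (v : ℕ → E), (∀ n, 0 < t n) ∧ Tendsto t atTop (𝓝 0) ∧
      Tendsto v atTop (𝓝 w) ∧ ∀ n, x + t n • v n ∈ Ω}

/-- Clarke (regular) tangent cone, via sequences. -/
def clarkeT {E : Type*} [NormedAddCommGroup E] [NormedSpace ℝ E] (Ω : Set E) (xb : E) : Set E :=
  {w | ∀ (x : ℕ → E) (t : ℕ → ℝ), (∀ n, x n ∈ Ω) → Tendsto x atTop (𝓝 xb) →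
      (∀ n, 0 < t n) → Tendsto t atTop (𝓝 0) →
      ∃ v : ℕ → E, Tendsto v atTop (𝓝 w) ∧ ∀ n, x n + t n • v n ∈ Ω}

/-- Paratingent cone, via sequences. -/
def paraT {E : Type*} [NormedAddCommGroup E] [NormedSpace ℝ E] (Ω : Set E) (xb : E) : Set E :=
  {w | ∃ (x : ℕ → E) (t : ℕ → ℝ) (v : ℕ → E), (∀ n, x n ∈ Ω) ∧ Tendsto x atTop (𝓝 xb) ∧
      (∀ n, 0 < t n) ∧ Tendsto t atTop (𝓝 0) ∧ Tendsto v atTop (𝓝 w) ∧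
      ∀ n, x n + t n • v n ∈ Ω}

open Filter Topology Set Metric

section Helpers

lemma ereal_cases (x : EReal) : x = ⊥ ∨ (∃ r:ℝ, x = (r:EReal)) ∨ x = ⊤ := by
  induction x using EReal.rec with
  | bot => exact Or.inl rfl
  | coe r => exact Or.inr (Or.inl ⟨r, rfl⟩)
  | top => exact Or.inr (Or.inr rfl)

lemma ereal_le_coe_of_ne_top {x : EReal} (h : x ≠ ⊤) : ∃ r : ℝ, x ≤ (r:EReal) :=
  ⟨x.toReal, EReal.le_coe_toReal h⟩

/-- choose ε > 0 making finitely many strict-slack linear conditions hold. -/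
lemma exists_eps_le {ι : Type*} (T : Finset ι) (a b : ι → ℝ) (ha : ∀ i ∈ T, a i < 0) :
    ∃ ε > (0:ℝ), ∀ i ∈ T, a i + ε * b i ≤ 0 := by
  set S := ∑ i ∈ T, max 0 (b i / (-a i)) with hS
  have hS0 : 0 ≤ S := Finset.sum_nonneg fun i _ => le_max_left _ _
  refine ⟨(1 + S)⁻¹, by positivity, fun i hi => ?_⟩
  have hai : 0 < -a i := by linarith [ha i hi]
  rcases le_or_gt (b i) 0 with hb | hb
  · have : (1+S)⁻¹ * b i ≤ 0 := mul_nonpos_of_nonneg_of_nonpos (by positivity) hb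
    linarith [ha i hi]
  · have h1 : b i / (-a i) ≤ 1 + S := by
      have := Finset.single_le_sum (f := fun i => max 0 (b i / (-a i)))
        (fun j _ => le_max_left _ _) hi
      have h2 : b i / (-a i) ≤ S := le_trans (le_max_right _ _) this
      linarith
    have h1S : (0:ℝ) < 1 + S := by linarith
    have : (1+S)⁻¹ * b i ≤ -a i := by
      rw [inv_mul_le_iff₀ h1S]
      linarith [(div_le_iff₀ hai).mp h1]
    linarith

/-- choose t > 0 large enough to make finitely many conditions with strictly negative slope hold. -/
lemma exists_t_le {ι : Type*} (T : Finset ι) (a b : ι → ℝ) (hb : ∀ i ∈ T, b i < 0) :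
    ∃ t > (0:ℝ), ∀ i ∈ T, a i + t * b i ≤ 0 := by
  set S := ∑ i ∈ T, max 0 (a i / (-b i)) with hS
  have hS0 : 0 ≤ S := Finset.sum_nonneg fun i _ => le_max_left _ _
  refine ⟨1 + S, by positivity, fun i hi => ?_⟩
  have hbi : 0 < -b i := by linarith [hb i hi]
  have h1 : a i / (-b i) ≤ 1 + S := by
    have := Finset.single_le_sum (f := fun i => max 0 (a i / (-b i)))
      (fun j _ => le_max_left _ _) hi
    have h2 : a i / (-b i) ≤ S := le_trans (le_max_right _ _) this
    linarith
  have : a i ≤ (1 + S) * (-b i) := by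
    calc a i = (a i / (-b i)) * (-b i) := (div_mul_cancel₀ _ (ne_of_gt hbi)).symm
      _ ≤ (1+S) * (-b i) := mul_le_mul_of_nonneg_right h1 (le_of_lt hbi)
  nlinarith

/-- choose δ > 0 small enough that t * b i ≤ a i for all 0 < t ≤ δ, given positive slacks a. -/
lemma exists_delta_le {ι : Type*} (T : Finset ι) (a b : ι → ℝ) (ha : ∀ i ∈ T, 0 < a i) :
    ∃ δ > (0:ℝ), ∀ t : ℝ, 0 < t → t ≤ δ → ∀ i ∈ T, t * b i ≤ a i := by
  set S := ∑ i ∈ T, max 0 (b i / a i) with hS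
  have hS0 : 0 ≤ S := Finset.sum_nonneg fun i _ => le_max_left _ _
  refine ⟨(1 + S)⁻¹, by positivity, fun t ht htδ i hi => ?_⟩
  rcases le_or_gt (b i) 0 with hb | hb
  · have : t * b i ≤ 0 := mul_nonpos_of_nonneg_of_nonpos ht.le hb
    linarith [ha i hi]
  · have h1 : b i / a i ≤ 1 + S := by
      have := Finset.single_le_sum (f := fun i => max 0 (b i / a i))
        (fun j _ => le_max_left _ _) hi
      have h2 : b i / a i ≤ S := le_trans (le_max_right _ _) this
      linarith
    have h1S : (0:ℝ) < 1 + S := by linarith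
    have h2 : t ≤ a i / b i := by
      rw [le_div_iff₀ hb] at *
      calc t * b i ≤ (1+S)⁻¹ * b i := mul_le_mul_of_nonneg_right htδ hb.le
        _ ≤ a i := by
            rw [inv_mul_le_iff₀ h1S]
            linarith [(div_le_iff₀ (ha i hi)).mp h1]
    calc t * b i ≤ (a i / b i) * b i := mul_le_mul_of_nonneg_right h2 hb.le
      _ = a i := div_mul_cancel₀ _ (ne_of_gt hb)

/-- the distance trick: finitely many closed sets; any of them containing a point near x̄
contains x̄ itself, for a uniform radius. -/
lemma exists_radius {X : Type*} [MetricSpace X] {ι : Type*} [Finite ι]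
    (S : ι → Set X) (hS : ∀ i, IsClosed (S i)) (xb : X) :
    ∃ r > (0:ℝ), ∀ i x, x ∈ S i → dist x xb ≤ r → xb ∈ S i := by
  have key : ∀ i, ∃ r > (0:ℝ), ∀ x, x ∈ S i → dist x xb ≤ r → xb ∈ S i := by
    intro i
    by_cases hm : xb ∈ S i
    · exact ⟨1, one_pos, fun _ _ _ => hm⟩
    by_cases hne : (S i).Nonempty
    · have hpos : 0 < infDist xb (S i) := by
        rcases lt_or_eq_of_le (infDist_nonneg (x := xb) (s := S i)) with h | h
        · exact h
        · exact absurd (((hS i).mem_iff_infDist_zero hne).mpr h.symm) hm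
      refine ⟨infDist xb (S i) / 2, by positivity, fun x hx hd => ?_⟩
      exfalso
      have := infDist_le_dist_of_mem (x := xb) hx
      rw [dist_comm] at this
      linarith
    · exact ⟨1, one_pos, fun x hx _ => absurd ⟨x, hx⟩ hne⟩
  choose rf hrf hrf2 using key
  cases isEmpty_or_nonempty ι with
  | inl h => exact ⟨1, one_pos, fun i => isEmptyElim i⟩
  | inr h =>
    haveI := Fintype.ofFinite ι
    refine ⟨Finset.univ.inf' Finset.univ_nonempty rf, ?_, fun i x hx hd => ?_⟩
    · rw [gt_iff_lt, Finset.lt_inf'_iff]; exact fun i _ => hrf i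
    · exact hrf2 i x hx (le_trans hd (Finset.inf'_le _ (Finset.mem_univ i)))

end Helpers
section Poly

variable {m s : ℕ}

/-- slope of the i-th affine piece in direction u -/
def qq (L : Fin s → EuclideanSpace ℝ (Fin m) →ₗ[ℝ] ℝ) (c : Fin s → ℝ) (i : Fin s) (u : EuclideanSpace ℝ (Fin m)) : ℝ :=
  L i u / (-(c i))

variable (g : EuclideanSpace ℝ (Fin m) → EReal) (L : Fin s → EuclideanSpace ℝ (Fin m) →ₗ[ℝ] ℝ) (c β : Fin s → ℝ)

/-- all "vertical" coefficients are ≤ 0 -/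
lemma cle (hepi : ∀ x (α:ℝ), g x ≤ (α:EReal) ↔ ∀ i, L i x + c i * α ≤ β i)
    (hbot : ∀ x, g x ≠ ⊥) (htop : ∃ x, g x ≠ ⊤) : ∀ i, c i ≤ 0 := by
  intro i
  by_contra hc
  push_neg at hc
  obtain ⟨x₀, hx₀⟩ := htop
  obtain ⟨α₀, hα₀⟩ := ereal_le_coe_of_ne_top hx₀
  set α := max α₀ ((β i - L i x₀)/(c i) + 1) with hα
  have h1 : g x₀ ≤ (α : EReal) :=
    le_trans hα₀ (by exact_mod_cast le_max_left _ _)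
  have h2 := (hepi x₀ α).mp h1 i
  have h3 : (β i - L i x₀)/(c i) + 1 ≤ α := le_max_right _ _
  have h4 : (β i - L i x₀)/(c i) < α := by linarith
  rw [div_lt_iff₀ hc] at h4
  linarith

/-- subdifferentiability forces a finite value -/
lemma gz_real (hbot : ∀ x, g x ≠ ⊥) (htop : ∃ x, g x ≠ ⊤) {z lam : EuclideanSpace ℝ (Fin m)}
    (hlam : lam ∈ subdiff g z) : ∃ ρ : ℝ, g z = (ρ : EReal) := by
  have h2 : g z ≠ ⊤ := by
    intro h
    obtain ⟨x₀, hx₀⟩ := htop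
    have := hlam x₀
    rw [h, EReal.top_add_coe, top_le_iff] at this
    exact hx₀ this
  exact ⟨(g z).toReal, (EReal.coe_toReal h2 (hbot z)).symm⟩

/-- there is an active constraint with negative vertical coefficient -/
lemma active_neg (hepi : ∀ x (α:ℝ), g x ≤ (α:EReal) ↔ ∀ i, L i x + c i * α ≤ β i)
    (hcle : ∀ i, c i ≤ 0) {z : EuclideanSpace ℝ (Fin m)} {ρ : ℝ} (hz : g z = (ρ:EReal)) :
    ∃ i, (L i z + c i * ρ = β i) ∧ c i < 0 := by
  by_contra h
  push_neg at h
  have hfeas : ∀ i, L i z + c i * ρ ≤ β i := (hepi z ρ).mp (le_of_eq hz)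
  classical
  set T : Finset (Fin s) := Finset.univ.filter (fun i => c i < 0) with hT
  have hslack : ∀ i ∈ T, 0 < β i - (L i z + c i * ρ) := by
    intro i hi
    rw [hT, Finset.mem_filter] at hi
    have hne : L i z + c i * ρ ≠ β i := fun he => absurd hi.2 (not_lt.mpr (h i he))
    exact lt_of_le_of_ne (by linarith [hfeas i]) (by intro he; exact hne (by linarith))
  obtain ⟨δ, hδ, hδle⟩ := exists_delta_le T (fun i => β i - (L i z + c i * ρ)) (fun i => -(c i)) hslack
  have hg : g z ≤ ((ρ - δ : ℝ) : EReal) := by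
    rw [hepi]
    intro i
    rcases lt_or_eq_of_le (hcle i) with hci | hci
    · have : δ * (-(c i)) ≤ β i - (L i z + c i * ρ) := by
        refine hδle δ hδ le_rfl i ?_
        rw [hT, Finset.mem_filter]; exact ⟨Finset.mem_univ i, hci⟩
      nlinarith
    · have h2 := hfeas i; rw [hci] at h2 ⊢; linarith
  rw [hz, EReal.coe_le_coe_iff] at hg
  linarith

/-- penetration lemma: moving from z along a direction compatible with the active constraints -/
lemma penet (hepi : ∀ x (α:ℝ), g x ≤ (α:EReal) ↔ ∀ i, L i x + c i * α ≤ β i)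
    {z : EuclideanSpace ℝ (Fin m)} {ρ : ℝ} (hz : g z = (ρ:EReal)) (w : EuclideanSpace ℝ (Fin m)) (q : ℝ)
    (hq : ∀ i, L i z + c i * ρ = β i → L i w + c i * q ≤ 0) :
    ∃ δ > (0:ℝ), ∀ t : ℝ, 0 < t → t ≤ δ → g (z + t • w) ≤ ((ρ + t * q : ℝ) : EReal) := by
  classical
  have hfeas : ∀ i, L i z + c i * ρ ≤ β i := (hepi z ρ).mp (le_of_eq hz)
  set T : Finset (Fin s) := Finset.univ.filter (fun i => L i z + c i * ρ ≠ β i) with hT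
  have hslack : ∀ i ∈ T, 0 < β i - (L i z + c i * ρ) := by
    intro i hi
    rw [hT, Finset.mem_filter] at hi
    exact lt_of_le_of_ne (by linarith [hfeas i]) (by intro he; exact hi.2 (by linarith))
  obtain ⟨δ, hδ, hδle⟩ := exists_delta_le T (fun i => β i - (L i z + c i * ρ))
    (fun i => L i w + c i * q) hslack
  refine ⟨δ, hδ, fun t ht htδ => ?_⟩
  rw [hepi]
  intro i
  have hL : L i (z + t • w) = L i z + t * L i w := by
    rw [map_add, map_smul, smul_eq_mul]
  by_cases hact : L i z + c i * ρ = β i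
  · have := hq i hact
    have h2 : t * (L i w + c i * q) ≤ 0 := mul_nonpos_of_nonneg_of_nonpos ht.le this
    rw [hL]; nlinarith
  · have : t * (L i w + c i * q) ≤ β i - (L i z + c i * ρ) := by
      refine hδle t ht htδ i ?_
      rw [hT, Finset.mem_filter]; exact ⟨Finset.mem_univ i, hact⟩
    rw [hL]; nlinarith

/-- a subgradient is dominated by the local slope function -/
lemma subgrad_le (hepi : ∀ x (α:ℝ), g x ≤ (α:EReal) ↔ ∀ i, L i x + c i * α ≤ β i)
    {z lam : EuclideanSpace ℝ (Fin m)} {ρ : ℝ} (hz : g z = (ρ:EReal)) (hlam : lam ∈ subdiff g z) (w : EuclideanSpace ℝ (Fin m)) (q : ℝ)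
    (hq : ∀ i, L i z + c i * ρ = β i → L i w + c i * q ≤ 0) :
    (inner ℝ lam w : ℝ) ≤ q := by
  obtain ⟨δ, hδ, hpen⟩ := penet g L c β hepi hz w q hq
  have h1 := hlam (z + δ • w)
  rw [add_sub_cancel_left, inner_smul_right, hz] at h1
  have h2 : ((ρ + δ * (inner ℝ lam w : ℝ) : ℝ) : EReal) ≤ ((ρ + δ * q : ℝ) : EReal) := by
    rw [EReal.coe_add, EReal.coe_mul]
    exact le_trans h1 (hpen δ hδ le_rfl)
  rw [EReal.coe_le_coe_iff] at h2
  have := (mul_le_mul_iff_right₀ hδ).mp (by linarith : δ * (inner ℝ lam w : ℝ) ≤ δ * q)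
  exact this

end Poly
section Subderiv

variable {m s : ℕ}
variable (g : EuclideanSpace ℝ (Fin m) → EReal)
variable (L : Fin s → EuclideanSpace ℝ (Fin m) →ₗ[ℝ] ℝ) (c β : Fin s → ℝ)

lemma qq_le_iff {i : Fin s} (hci : c i < 0) (u : EuclideanSpace ℝ (Fin m)) (r : ℝ) :
    qq L c i u ≤ r ↔ L i u + c i * r ≤ 0 := by
  rw [qq, div_le_iff₀ (by linarith : (0:ℝ) < -(c i))]
  constructor <;> intro h <;> nlinarith

lemma qq_eq_iff {i : Fin s} (hci : c i < 0) (u : EuclideanSpace ℝ (Fin m)) (r : ℝ) :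
    qq L c i u = r ↔ L i u + c i * r = 0 := by
  rw [qq, div_eq_iff (by linarith : -(c i) ≠ 0)]
  constructor <;> intro h <;> nlinarith

/-- infeasible direction: subderivative is +∞ -/
lemma subderiv_top (hepi : ∀ x (α:ℝ), g x ≤ (α:EReal) ↔ ∀ i, L i x + c i * α ≤ β i)
    {z : EuclideanSpace ℝ (Fin m)} {ρ : ℝ} (hz : g z = (ρ:EReal)) {j : Fin s}
    {w : EuclideanSpace ℝ (Fin m)}
    (hj : L j z + c j * ρ = β j) (hcj : c j = 0) (hLj : 0 < L j w) :
    subderiv g z w = ⊤ := by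
  have hev : ∀ᶠ p : ℝ × EuclideanSpace ℝ (Fin m) in (𝓝[>] (0:ℝ)) ×ˢ 𝓝 w,
      (g (z + p.1 • p.2) - g z) * (((p.1)⁻¹ : ℝ) : EReal) = ⊤ := by
    have h1 : ∀ᶠ t : ℝ in 𝓝[>] (0:ℝ), t ∈ Set.Ioi (0:ℝ) := eventually_mem_nhdsWithin
    have hc : Continuous (L j) := LinearMap.continuous_of_finiteDimensional _
    have h2 : ∀ᶠ v in 𝓝 w, 0 < L j v := (hc.tendsto w).eventually (eventually_gt_nhds hLj)
    filter_upwards [h1.prod_inl (𝓝 w), h2.prod_inr (𝓝[>] (0:ℝ))] with p hp1 hp2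
    have hp1' : (0:ℝ) < p.1 := hp1
    have hg : g (z + p.1 • p.2) = ⊤ := by
      by_contra hne
      obtain ⟨α, hα⟩ := ereal_le_coe_of_ne_top hne
      have h3 := (hepi _ α).mp hα j
      rw [map_add, map_smul, smul_eq_mul, hcj] at h3
      rw [hcj] at hj
      nlinarith [mul_pos hp1' hp2]
    rw [hg, hz, EReal.top_sub_coe, EReal.top_mul_of_pos]
    exact_mod_cast inv_pos.mpr hp1'
  rw [subderiv, Filter.liminf_congr hev, Filter.liminf_const]

/-- feasible direction: subderivative equals the max of the active slopes -/
lemma subderiv_eq (hepi : ∀ x (α:ℝ), g x ≤ (α:EReal) ↔ ∀ i, L i x + c i * α ≤ β i)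
    (hbot : ∀ x, g x ≠ ⊥) (hcle : ∀ i, c i ≤ 0)
    {z : EuclideanSpace ℝ (Fin m)} {ρ : ℝ} (hz : g z = (ρ:EReal))
    {w : EuclideanSpace ℝ (Fin m)} {i₀ : Fin s}
    (hfeas : ∀ j, L j z + c j * ρ = β j → c j = 0 → L j w ≤ 0)
    (hact₀ : L i₀ z + c i₀ * ρ = β i₀) (hc₀ : c i₀ < 0)
    (hmax : ∀ i, L i z + c i * ρ = β i → c i < 0 → qq L c i w ≤ qq L c i₀ w) :
    subderiv g z w = ((qq L c i₀ w : ℝ) : EReal) := by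
  have hc₀' : (0:ℝ) < -(c i₀) := by linarith
  apply le_antisymm
  · -- upper bound via penetration along the fixed direction w
    have hside : ∀ i, L i z + c i * ρ = β i → L i w + c i * qq L c i₀ w ≤ 0 := by
      intro i hacti
      rcases lt_or_eq_of_le (hcle i) with hci | hci
      · exact (qq_le_iff L c hci w _).mp (hmax i hacti hci)
      · rw [hci, zero_mul, add_zero]
        exact hfeas i hacti hci
    obtain ⟨δ, hδ, hpen⟩ := penet g L c β hepi hz w (qq L c i₀ w) hside
    refine Filter.liminf_le_of_frequently_le ?_ Filter.isBounded_ge_of_bot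
    rw [Filter.frequently_iff]
    intro S hS
    rw [Filter.mem_prod_iff] at hS
    obtain ⟨U, hU, V, hV, hUV⟩ := hS
    have hUmem : U ∩ Set.Ioc 0 δ ∈ 𝓝[>] (0:ℝ) :=
      Filter.inter_mem hU (Ioc_mem_nhdsGT_of_mem ⟨le_refl 0, hδ⟩)
    obtain ⟨t, htU, ht0, htδ⟩ := Filter.nonempty_of_mem hUmem
    refine ⟨(t, w), hUV ⟨htU, mem_of_mem_nhds hV⟩, ?_⟩
    have hle := hpen t ht0 htδ
    rcases ereal_cases (g (z + t • w)) with hb | ⟨x, hx⟩ | ht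
    · exact absurd hb (hbot _)
    · rw [hx, hz, ← EReal.coe_sub, ← EReal.coe_mul, EReal.coe_le_coe_iff]
      rw [hx, EReal.coe_le_coe_iff] at hle
      have : x - ρ ≤ t * qq L c i₀ w := by linarith
      calc (x - ρ) * t⁻¹ ≤ (t * qq L c i₀ w) * t⁻¹ :=
            mul_le_mul_of_nonneg_right this (inv_nonneg.mpr ht0.le)
        _ = qq L c i₀ w := by field_simp
    · rw [ht] at hle
      exact absurd (top_le_iff.mp hle) (EReal.coe_ne_top _)
  · -- lower bound : the quotient eventually dominates the slope of piece i₀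
    have h1 : ∀ᶠ t : ℝ in 𝓝[>] (0:ℝ), t ∈ Set.Ioi (0:ℝ) := eventually_mem_nhdsWithin
    have hev : ∀ᶠ p : ℝ × EuclideanSpace ℝ (Fin m) in (𝓝[>] (0:ℝ)) ×ˢ 𝓝 w,
        ((qq L c i₀ p.2 : ℝ) : EReal) ≤ (g (z + p.1 • p.2) - g z) * (((p.1)⁻¹ : ℝ) : EReal) := by
      filter_upwards [h1.prod_inl (𝓝 w)] with p hp1
      have hp1' : (0:ℝ) < p.1 := hp1
      rcases ereal_cases (g (z + p.1 • p.2)) with hb | ⟨x, hx⟩ | ht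
      · exact absurd hb (hbot _)
      · rw [hx, hz, ← EReal.coe_sub, ← EReal.coe_mul, EReal.coe_le_coe_iff]
        have h3 := (hepi _ x).mp (le_of_eq hx) i₀
        rw [map_add, map_smul, smul_eq_mul] at h3
        have key : p.1 * L i₀ p.2 ≤ (-(c i₀)) * (x - ρ) := by nlinarith
        rw [qq, div_le_iff₀ hc₀']
        have h4 : p.1 * (L i₀ p.2) * p.1⁻¹ ≤ (-(c i₀)) * (x-ρ) * p.1⁻¹ :=
          mul_le_mul_of_nonneg_right key (inv_nonneg.mpr hp1'.le)
        rw [mul_comm p.1 (L i₀ p.2), mul_assoc, mul_inv_cancel₀ (ne_of_gt hp1'), mul_one] at h4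
        calc L i₀ p.2 ≤ (-(c i₀)) * (x-ρ) * p.1⁻¹ := h4
          _ = (x - ρ) * p.1⁻¹ * (-(c i₀)) := by ring
      · rw [ht, hz, EReal.top_sub_coe, EReal.top_mul_of_pos (by exact_mod_cast inv_pos.mpr hp1')]
        exact le_top
    have hcont : Continuous (fun v : EuclideanSpace ℝ (Fin m) => qq L c i₀ v) := by
      unfold qq
      exact (LinearMap.continuous_of_finiteDimensional (L i₀)).div_const _
    have htend : Filter.Tendsto (fun p : ℝ × EuclideanSpace ℝ (Fin m) => ((qq L c i₀ p.2 : ℝ) : EReal))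
        ((𝓝[>] (0:ℝ)) ×ˢ 𝓝 w) (𝓝 ((qq L c i₀ w : ℝ) : EReal)) :=
      EReal.tendsto_coe.mpr ((hcont.tendsto w).comp Filter.tendsto_snd)
    calc ((qq L c i₀ w : ℝ) : EReal)
        = Filter.liminf (fun p : ℝ × EuclideanSpace ℝ (Fin m) => ((qq L c i₀ p.2 : ℝ) : EReal))
          ((𝓝[>] (0:ℝ)) ×ˢ 𝓝 w) := (htend.liminf_eq).symm
      _ ≤ subderiv g z w := Filter.liminf_le_liminf hev

end Subderiv
section Kchar

variable {m s : ℕ}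
variable (g : EuclideanSpace ℝ (Fin m) → EReal)
variable (L : Fin s → EuclideanSpace ℝ (Fin m) →ₗ[ℝ] ℝ) (c β : Fin s → ℝ)

/-- combinatorial characterization of the critical cone -/
lemma kchar (hepi : ∀ x (α:ℝ), g x ≤ (α:EReal) ↔ ∀ i, L i x + c i * α ≤ β i)
    (hbot : ∀ x, g x ≠ ⊥) (hcle : ∀ i, c i ≤ 0)
    {z : EuclideanSpace ℝ (Fin m)} {ρ : ℝ} (hz : g z = (ρ:EReal))
    (lam w : EuclideanSpace ℝ (Fin m)) :
    w ∈ Kcone g z lam ↔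
      ((∀ i, L i z + c i * ρ = β i → L i w + c i * (inner ℝ lam w : ℝ) ≤ 0) ∧
       (∃ i, (L i z + c i * ρ = β i) ∧ c i < 0 ∧ L i w + c i * (inner ℝ lam w : ℝ) = 0)) := by
  constructor
  · intro hK
    have hKs : subderiv g z w = ((inner ℝ lam w : ℝ) : EReal) := hK
    -- first : feasibility w.r.t. the active constraints with c = 0
    have hfeas : ∀ j, L j z + c j * ρ = β j → c j = 0 → L j w ≤ 0 := by
      intro j hact hcj
      by_contra hpos
      push_neg at hpos
      rw [subderiv_top g L c β hepi hz hact hcj hpos] at hKs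
      exact absurd hKs.symm (EReal.coe_ne_top _)
    classical
    obtain ⟨i₁, hact₁, hc₁⟩ := active_neg g L c β hepi hcle hz
    set T : Finset (Fin s) := Finset.univ.filter (fun i => L i z + c i * ρ = β i ∧ c i < 0) with hT
    have hTne : T.Nonempty := ⟨i₁, by rw [hT, Finset.mem_filter]; exact ⟨Finset.mem_univ _, hact₁, hc₁⟩⟩
    obtain ⟨i₀, hi₀T, hi₀max⟩ := Finset.exists_max_image T (fun i => qq L c i w) hTne
    rw [hT, Finset.mem_filter] at hi₀T
    obtain ⟨-, hact₀, hc₀⟩ := hi₀T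
    have heq : subderiv g z w = ((qq L c i₀ w : ℝ) : EReal) := by
      refine subderiv_eq g L c β hepi hbot hcle hz hfeas hact₀ hc₀ ?_
      intro i hact hci
      exact hi₀max i (by rw [hT, Finset.mem_filter]; exact ⟨Finset.mem_univ _, hact, hci⟩)
    have hval : qq L c i₀ w = (inner ℝ lam w : ℝ) := by
      rw [heq] at hKs
      exact_mod_cast hKs
    constructor
    · intro i hact
      rcases lt_or_eq_of_le (hcle i) with hci | hci
      · refine (qq_le_iff L c hci w _).mp ?_
        rw [← hval]
        exact hi₀max i (by rw [hT, Finset.mem_filter]; exact ⟨Finset.mem_univ _, hact, hci⟩)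
      · rw [hci, zero_mul, add_zero]
        exact hfeas i hact hci
    · exact ⟨i₀, hact₀, hc₀, (qq_eq_iff L c hc₀ w _).mp hval⟩
  · rintro ⟨hall, i₀, hact₀, hc₀, heq₀⟩
    have hval : qq L c i₀ w = (inner ℝ lam w : ℝ) := (qq_eq_iff L c hc₀ w _).mpr heq₀
    have hfeas : ∀ j, L j z + c j * ρ = β j → c j = 0 → L j w ≤ 0 := by
      intro j hact hcj
      have := hall j hact
      rw [hcj, zero_mul, add_zero] at this
      exact this
    have hmax : ∀ i, L i z + c i * ρ = β i → c i < 0 → qq L c i w ≤ qq L c i₀ w := by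
      intro i hact hci
      rw [hval]
      exact (qq_le_iff L c hci w _).mpr (hall i hact)
    show subderiv g z w = _
    rw [subderiv_eq g L c β hepi hbot hcle hz hfeas hact₀ hc₀ hmax, hval]

end Kchar

section Sets

variable {m s : ℕ}
variable (L : Fin s → EuclideanSpace ℝ (Fin m) →ₗ[ℝ] ℝ) (c : Fin s → ℝ) (β : Fin s → ℝ)

/-- the set of slopes dominated by the sublinear function attached to an activity pattern -/
def SAset (A : Finset (Fin s)) : Set (EuclideanSpace ℝ (Fin m)) :=
  {μ | ∀ w : EuclideanSpace ℝ (Fin m), ∀ q : ℝ,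
    (∀ i ∈ A, L i w + c i * q ≤ 0) → (inner ℝ μ w : ℝ) ≤ q}

/-- cone of directions with a prescribed facial pattern -/
def Wset (A : Finset (Fin s)) (i₀ : Fin s) (A' B' : Finset (Fin s)) :
    Set (EuclideanSpace ℝ (Fin m)) :=
  {u | (∀ j ∈ A, c j = 0 → L j u ≤ 0) ∧ (∀ j ∈ B', L j u = 0) ∧
       (∀ i ∈ A, c i < 0 → qq L c i u ≤ qq L c i₀ u) ∧
       (∀ i ∈ A', qq L c i u = qq L c i₀ u)}

/-- slopes behaving like the i₀-th piece on the face `Wset` -/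
def Sset' (A : Finset (Fin s)) (i₀ : Fin s) (A' B' : Finset (Fin s)) :
    Set (EuclideanSpace ℝ (Fin m)) :=
  SAset L c A ∩ {μ | ∀ u ∈ Wset L c A i₀ A' B', (inner ℝ μ u : ℝ) = qq L c i₀ u}

lemma isClosed_SAset (A : Finset (Fin s)) : IsClosed (SAset L c A (m := m)) := by
  have : SAset L c A (m := m) = ⋂ (p : (EuclideanSpace ℝ (Fin m)) × ℝ)
      (_ : ∀ i ∈ A, L i p.1 + c i * p.2 ≤ 0),
      {μ : EuclideanSpace ℝ (Fin m) | (inner ℝ μ p.1 : ℝ) ≤ p.2} := by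
    ext μ
    simp only [SAset, Set.mem_iInter, Set.mem_setOf_eq]
    exact ⟨fun h p hp => h p.1 p.2 hp, fun h w q hq => h (w, q) hq⟩
  rw [this]
  refine isClosed_iInter fun p => isClosed_iInter fun _ => ?_
  exact isClosed_le (Continuous.inner continuous_id continuous_const) continuous_const

lemma isClosed_Sset' (A : Finset (Fin s)) (i₀ : Fin s) (A' B' : Finset (Fin s)) :
    IsClosed (Sset' L c A i₀ A' B' (m := m)) := by
  refine (isClosed_SAset L c A).inter ?_
  have : {μ : EuclideanSpace ℝ (Fin m) | ∀ u ∈ Wset L c A i₀ A' B', (inner ℝ μ u : ℝ) = qq L c i₀ u}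
      = ⋂ (u : EuclideanSpace ℝ (Fin m)) (_ : u ∈ Wset L c A i₀ A' B'),
        {μ : EuclideanSpace ℝ (Fin m) | (inner ℝ μ u : ℝ) = qq L c i₀ u} := by
    ext μ
    simp only [Set.mem_iInter, Set.mem_setOf_eq]
  rw [this]
  refine isClosed_iInter fun u => isClosed_iInter fun _ => ?_
  exact isClosed_eq (Continuous.inner continuous_id continuous_const) continuous_const

end Sets
set_option maxHeartbeats 2000000 in
/-- local inclusions for critical cones of a polyhedral function. -/
theorem stmt8 {m : ℕ} (g : EuclideanSpace ℝ (Fin m) → EReal) (hg : IsPolyhedralFn g)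
    (zb lb : EuclideanSpace ℝ (Fin m)) (hl : lb ∈ subdiff g zb) :
    ∃ r > (0 : ℝ), ∀ z l : EuclideanSpace ℝ (Fin m), l ∈ subdiff g z →
      dist (z, l) (zb, lb) ≤ r →
      Kcone g z l ⊆ {w | ∃ a ∈ Kcone g zb lb, ∃ b ∈ Kcone g zb lb, w = a - b} ∧
      Kcone g zb lb ∩ {w | -w ∈ Kcone g zb lb} ⊆ Kcone g z l := by
  classical
  obtain ⟨htop, hbot, s, b, β, hepi0⟩ := hg
  set L : Fin s → EuclideanSpace ℝ (Fin m) →ₗ[ℝ] ℝ :=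
    fun i => (b i).comp (LinearMap.inl ℝ (EuclideanSpace ℝ (Fin m)) ℝ) with hLdef
  set c : Fin s → ℝ := fun i => b i (0, 1) with hcdef
  have hepi : ∀ x (α:ℝ), g x ≤ (α:EReal) ↔ ∀ i, L i x + c i * α ≤ β i := by
    intro x α
    have hx : g x ≤ ((x, α).2 : EReal) ↔ (x, α) ∈ {p : (EuclideanSpace ℝ (Fin m)) × ℝ | ∀ i, b i p ≤ β i} := by
      rw [← hepi0]; rfl
    simp only [Set.mem_setOf_eq] at hx
    rw [hx]
    refine forall_congr' fun i => ?_
    have hb : b i (x, α) = L i x + c i * α := by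
      have hsplit : (x, α) = (x, (0:ℝ)) + α • ((0 : EuclideanSpace ℝ (Fin m)), (1:ℝ)) := by
        simp [Prod.ext_iff]
      rw [hsplit, map_add, map_smul, smul_eq_mul]
      simp only [hLdef, hcdef, LinearMap.comp_apply, LinearMap.inl_apply]
      ring
    rw [hb]
  have hcle := cle g L c β hepi hbot htop
  obtain ⟨ρb, hρb⟩ := gz_real g hbot htop hl
  have hfzb : ∀ i, L i zb + c i * ρb ≤ β i := (hepi zb ρb).mp (le_of_eq hρb)
  -- the trick radius
  obtain ⟨r₂, hr₂pos, htrick⟩ := exists_radius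
    (ι := (Finset (Fin s)) ⊕ ((Finset (Fin s)) × Fin s × (Finset (Fin s)) × (Finset (Fin s))))
    (Sum.elim (fun A => SAset L c A) (fun P => Sset' L c P.1 P.2.1 P.2.2.1 P.2.2.2))
    (by rintro (A | ⟨A, i₀, A', B'⟩)
        exacts [isClosed_SAset L c A, isClosed_Sset' L c A i₀ A' B']) lb
  -- bounds for the linear maps
  have hKex : ∀ i : Fin s, ∃ K : ℝ, 0 ≤ K ∧ ∀ x, |L i x| ≤ K * ‖x‖ := by
    intro i
    refine ⟨‖LinearMap.toContinuousLinearMap (L i)‖, norm_nonneg _, fun x => ?_⟩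
    have h1 := (LinearMap.toContinuousLinearMap (L i)).le_opNorm x
    simpa [Real.norm_eq_abs] using h1
  choose K hK0 hK using hKex
  -- the inactive index set at the base point, and the radius
  set Tin : Finset (Fin s) := Finset.univ.filter (fun i => L i zb + c i * ρb ≠ β i) with hTin
  set R : Finset ℝ := insert 1 (insert r₂ (Tin.image
    (fun i => (β i - (L i zb + c i * ρb)) / (K i + |c i| * (‖lb‖ + 1) + 1)))) with hR
  have hRne : R.Nonempty := ⟨1, Finset.mem_insert_self _ _⟩
  set r := R.min' hRne with hrdef
  have hr1 : r ≤ 1 := Finset.min'_le _ _ (Finset.mem_insert_self _ _)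
  have hrr₂ : r ≤ r₂ := Finset.min'_le _ _
    (Finset.mem_insert_of_mem (Finset.mem_insert_self _ _))
  have hslack : ∀ i ∈ Tin, 0 < β i - (L i zb + c i * ρb) := by
    intro i hi
    rw [hTin, Finset.mem_filter] at hi
    have := hfzb i
    rcases lt_or_eq_of_le this with h | h
    · linarith
    · exact absurd h hi.2
  have hrpos : 0 < r := by
    rw [hrdef, Finset.lt_min'_iff]
    intro x hx
    rw [hR] at hx
    rcases Finset.mem_insert.mp hx with rfl | hx
    · exact one_pos
    rcases Finset.mem_insert.mp hx with rfl | hx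
    · exact hr₂pos
    obtain ⟨i, hiTin, rfl⟩ := Finset.mem_image.mp hx
    have h1 := hslack i hiTin
    have h2 : (0:ℝ) < K i + |c i| * (‖lb‖ + 1) + 1 := by
      have h3 := hK0 i
      have h4 : (0:ℝ) ≤ |c i| * (‖lb‖ + 1) := by positivity
      linarith
    exact div_pos h1 h2
  refine ⟨r, hrpos, ?_⟩
  intro z l hsub hdist
  obtain ⟨ρ, hρ⟩ := gz_real g hbot htop hsub
  rw [Prod.dist_eq, sup_le_iff] at hdist
  obtain ⟨hdz, hdl⟩ := hdist
  rw [dist_eq_norm] at hdz hdl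
  set d := z - zb with hd
  have hfz : ∀ i, L i z + c i * ρ ≤ β i := (hepi z ρ).mp (le_of_eq hρ)
  -- subgradient inequalities
  have hγ1 : (inner ℝ lb d : ℝ) ≤ ρ - ρb := by
    have h1 := hl z
    rw [hρb, hρ, ← hd] at h1
    rw [← EReal.coe_add, EReal.coe_le_coe_iff] at h1
    linarith
  have hγ2 : ρ - ρb ≤ (inner ℝ l d : ℝ) := by
    have h1 := hsub zb
    have hzz : zb - z = -d := by rw [hd]; abel
    rw [hρb, hρ, hzz, inner_neg_right] at h1
    rw [← EReal.coe_add, EReal.coe_le_coe_iff] at h1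
    linarith
  have hγabs : |ρ - ρb| ≤ (‖lb‖ + 1) * ‖d‖ := by
    have hnl : ‖l‖ ≤ ‖lb‖ + 1 := by
      have h1 : ‖l‖ - ‖lb‖ ≤ ‖l - lb‖ := norm_sub_norm_le _ _
      linarith [le_trans hdl hr1]
    have hub : ρ - ρb ≤ (‖lb‖+1) * ‖d‖ := by
      refine le_trans hγ2 (le_trans (real_inner_le_norm l d) ?_)
      exact mul_le_mul_of_nonneg_right hnl (norm_nonneg _)
    have hlb2 : -((‖lb‖+1) * ‖d‖) ≤ ρ - ρb := by
      have h2 : |(inner ℝ lb d : ℝ)| ≤ ‖lb‖ * ‖d‖ := abs_real_inner_le_norm _ _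
      have h3 : -(‖lb‖ * ‖d‖) ≤ (inner ℝ lb d : ℝ) := by
        have := abs_le.mp h2; linarith [this.1]
      nlinarith [norm_nonneg d]
    exact abs_le.mpr ⟨hlb2, hub⟩
  -- activity persistence
  have hAsub : ∀ i, L i z + c i * ρ = β i → L i zb + c i * ρb = β i := by
    intro i hact
    by_contra hne
    have hiTin : i ∈ Tin := by rw [hTin, Finset.mem_filter]; exact ⟨Finset.mem_univ _, hne⟩
    have hsl := hslack i hiTin
    have hrle : r ≤ (β i - (L i zb + c i * ρb)) / (K i + |c i| * (‖lb‖ + 1) + 1) := by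
      refine Finset.min'_le _ _ ?_
      rw [hR]
      exact Finset.mem_insert_of_mem (Finset.mem_insert_of_mem (Finset.mem_image_of_mem _ hiTin))
    set den := K i + |c i| * (‖lb‖ + 1) + 1 with hden
    have hden0 : (0:ℝ) < den := by
      rw [hden]
      have h3 := hK0 i
      have h4 : (0:ℝ) ≤ |c i| * (‖lb‖ + 1) := by positivity
      linarith
    have habs1 : |L i d| ≤ K i * ‖d‖ := hK i d
    have habs2 : |c i * (ρ - ρb)| ≤ |c i| * ((‖lb‖+1) * ‖d‖) := by
      rw [abs_mul]
      exact mul_le_mul_of_nonneg_left hγabs (abs_nonneg _)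
    have hsplit : L i z + c i * ρ = (L i zb + c i * ρb) + (L i d + c i * (ρ - ρb)) := by
      have : L i d = L i z - L i zb := by rw [hd, map_sub]
      rw [this]; ring
    have hd2 : ‖d‖ ≤ (β i - (L i zb + c i * ρb)) / den := le_trans hdz hrle
    have hkey : (K i + |c i| * (‖lb‖+1)) * ‖d‖ < β i - (L i zb + c i * ρb) := by
      have h5 : (K i + |c i| * (‖lb‖+1)) * ‖d‖
          ≤ (K i + |c i| * (‖lb‖+1)) * ((β i - (L i zb + c i * ρb)) / den) := by
        refine mul_le_mul_of_nonneg_left hd2 ?_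
        have h3 := hK0 i
        have h4 : (0:ℝ) ≤ |c i| * (‖lb‖ + 1) := by positivity
        linarith
      have h6 : (K i + |c i| * (‖lb‖+1)) * ((β i - (L i zb + c i * ρb)) / den)
          < β i - (L i zb + c i * ρb) := by
        have hlt : K i + |c i| * (‖lb‖+1) < den := by rw [hden]; linarith
        have hq0 : 0 < (β i - (L i zb + c i * ρb)) / den := div_pos hsl hden0
        calc (K i + |c i| * (‖lb‖+1)) * ((β i - (L i zb + c i * ρb)) / den)
            < den * ((β i - (L i zb + c i * ρb)) / den) := mul_lt_mul_of_pos_right hlt hq0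
          _ = β i - (L i zb + c i * ρb) := by field_simp
      linarith
    have : L i z + c i * ρ < β i := by
      have h7 : L i d + c i * (ρ - ρb) ≤ (K i + |c i| * (‖lb‖+1)) * ‖d‖ := by
        have := le_abs_self (L i d)
        have := le_abs_self (c i * (ρ - ρb))
        nlinarith
      linarith [hsplit, hkey]
    linarith [hact, this]
  -- the active set at z, as a finset
  set Az : Finset (Fin s) := Finset.univ.filter (fun i => L i z + c i * ρ = β i) with hAz
  have hAzmem : ∀ i, i ∈ Az ↔ L i z + c i * ρ = β i := by
    intro i; rw [hAz, Finset.mem_filter]; simp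
  -- l belongs to the S-set of its own pattern
  have hlSA : l ∈ SAset L c Az := by
    intro w q hq
    exact subgrad_le g L c β hepi hρ hsub w q (fun i hact => hq i ((hAzmem i).mpr hact))
  have hdistl : dist l lb ≤ r₂ := by rw [dist_eq_norm]; exact le_trans hdl hrr₂
  have hlbSA : lb ∈ SAset L c Az := htrick (Sum.inl Az) l hlSA hdistl
  -- the increment of g equals the linearization by lb
  have hγeq : ρ - ρb = (inner ℝ lb d : ℝ) := by
    refine le_antisymm ?_ hγ1
    have hcond : ∀ i ∈ Az, L i (-d) + c i * (-(ρ - ρb)) ≤ 0 := by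
      intro i hi
      rw [hAzmem] at hi
      have hb2 := hAsub i hi
      have : L i d + c i * (ρ - ρb) = 0 := by
        have hLd : L i d = L i z - L i zb := by rw [hd, map_sub]
        rw [hLd]; linarith [hi, hb2]
      rw [map_neg]; linarith
    have := hlbSA (-d) (-(ρ - ρb)) hcond
    rw [inner_neg_right] at this
    linarith
  -- equalities / strict inequalities for active constraints
  have hGz : ∀ i, L i z + c i * ρ = β i → L i d + c i * (inner ℝ lb d : ℝ) = 0 := by
    intro i hi
    have hb2 := hAsub i hi
    have hLd : L i d = L i z - L i zb := by rw [hd, map_sub]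
    rw [← hγeq, hLd]; linarith
  have hGlt : ∀ i, L i zb + c i * ρb = β i → ¬(L i z + c i * ρ = β i) →
      L i d + c i * (inner ℝ lb d : ℝ) < 0 := by
    intro i hib hine
    have h1 : L i z + c i * ρ < β i := lt_of_le_of_ne (hfz i) hine
    have hLd : L i d = L i z - L i zb := by rw [hd, map_sub]
    rw [← hγeq, hLd]; linarith
  obtain ⟨i₁, hi₁act, hi₁c⟩ := active_neg g L c β hepi hcle hρ
  constructor
  · -- inclusion (i)
    intro w hw
    rw [kchar g L c β hepi hbot hcle hρ l w] at hw
    obtain ⟨hall, i₀, hact₀, hc₀, heq₀⟩ := hw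
    have hqqw : qq L c i₀ w = (inner ℝ l w : ℝ) := (qq_eq_iff L c hc₀ w _).mpr heq₀
    set A' : Finset (Fin s) := Finset.univ.filter
      (fun i => (L i z + c i * ρ = β i) ∧ c i < 0 ∧ qq L c i w = qq L c i₀ w) with hA'
    set B' : Finset (Fin s) := Finset.univ.filter
      (fun i => (L i z + c i * ρ = β i) ∧ c i = 0 ∧ L i w = 0) with hB'
    have hwW : w ∈ Wset L c Az i₀ A' B' := by
      refine ⟨?_, ?_, ?_, ?_⟩
      · intro j hj hcj
        rw [hAzmem] at hj
        have := hall j hj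
        rw [hcj, zero_mul, add_zero] at this
        exact this
      · intro j hj
        rw [hB', Finset.mem_filter] at hj
        exact hj.2.2.2
      · intro i hi hci
        rw [hAzmem] at hi
        rw [hqqw]
        exact (qq_le_iff L c hci w _).mpr (hall i hi)
      · intro i hi
        rw [hA', Finset.mem_filter] at hi
        exact hi.2.2.2
    have hlS' : l ∈ Sset' L c Az i₀ A' B' := by
      refine ⟨hlSA, ?_⟩
      intro u hu
      obtain ⟨hu1, hu2, hu3, hu4⟩ := hu
      have hle : (inner ℝ l u : ℝ) ≤ qq L c i₀ u := by
        refine hlSA u (qq L c i₀ u) ?_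
        intro i hi
        rcases lt_or_eq_of_le (hcle i) with hci | hci
        · exact (qq_le_iff L c hci u _).mp (hu3 i hi hci)
        · rw [hci, zero_mul, add_zero]
          exact hu1 i hi hci
      -- reverse inequality by the relative-interior trick
      set aF : Fin s → ℝ := fun i => if c i = 0 then L i w else qq L c i w - qq L c i₀ w with haF
      set bF : Fin s → ℝ := fun i => if c i = 0 then L i w - L i u
        else (qq L c i w - qq L c i₀ w) - (qq L c i u - qq L c i₀ u) with hbF
      set T : Finset (Fin s) := Finset.univ.filter
        (fun i => (L i z + c i * ρ = β i) ∧ ((c i = 0 ∧ L i w ≠ 0) ∨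
          (c i < 0 ∧ qq L c i w ≠ qq L c i₀ w))) with hT
      have haFneg : ∀ i ∈ T, aF i < 0 := by
        intro i hi
        rw [hT, Finset.mem_filter] at hi
        obtain ⟨-, hiact, hcase⟩ := hi
        rcases hcase with ⟨hc0, hLne⟩ | ⟨hcneg, hqne⟩
        · simp only [haF]; rw [if_pos hc0]
          have := hall i hiact
          rw [hc0, zero_mul, add_zero] at this
          exact lt_of_le_of_ne this hLne
        · simp only [haF]; rw [if_neg (by intro h; rw [h] at hcneg; exact lt_irrefl _ hcneg)]
          have h1 : qq L c i w ≤ qq L c i₀ w := by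
            rw [hqqw]; exact (qq_le_iff L c hcneg w _).mpr (hall i hiact)
          have := lt_of_le_of_ne h1 hqne
          linarith
      obtain ⟨ε, hε, hεle⟩ := exists_eps_le T aF bF haFneg
      have hqlin : ∀ i : Fin s, qq L c i (w + ε • (w - u)) = qq L c i w + ε * (qq L c i w - qq L c i u) := by
        intro i
        rw [qq, qq, qq, map_add, map_smul, map_sub, smul_eq_mul]
        ring
      have hLlin : ∀ i : Fin s, L i (w + ε • (w - u)) = L i w + ε * (L i w - L i u) := by
        intro i
        rw [map_add, map_smul, map_sub, smul_eq_mul]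
      have hlu' : (inner ℝ l (w + ε • (w - u)) : ℝ) ≤ qq L c i₀ (w + ε • (w - u)) := by
        refine hlSA _ _ ?_
        intro i hi
        have hiact := (hAzmem i).mp hi
        rcases lt_or_eq_of_le (hcle i) with hci | hci
        · -- c i < 0
          refine (qq_le_iff L c hci _ _).mp ?_
          rw [hqlin i, hqlin i₀]
          by_cases hqe : qq L c i w = qq L c i₀ w
          · have hiA' : i ∈ A' := by
              rw [hA', Finset.mem_filter]
              exact ⟨Finset.mem_univ _, hiact, hci, hqe⟩
            have := hu4 i hiA'
            rw [hqe, this]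
          · have hiT : i ∈ T := by
              rw [hT, Finset.mem_filter]
              exact ⟨Finset.mem_univ _, hiact, Or.inr ⟨hci, hqe⟩⟩
            have h2 := hεle i hiT
            simp only [haF, hbF] at h2
            rw [if_neg (by intro h; rw [h] at hci; exact lt_irrefl _ hci),
                if_neg (by intro h; rw [h] at hci; exact lt_irrefl _ hci)] at h2
            linarith
        · -- c i = 0
          rw [hci, zero_mul, add_zero, hLlin i]
          by_cases hLe : L i w = 0
          · have hiB' : i ∈ B' := by
              rw [hB', Finset.mem_filter]
              exact ⟨Finset.mem_univ _, hiact, hci, hLe⟩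
            have := hu2 i hiB'
            rw [hLe, this]
            simp
          · have hiT : i ∈ T := by
              rw [hT, Finset.mem_filter]
              exact ⟨Finset.mem_univ _, hiact, Or.inl ⟨hci, hLe⟩⟩
            have h2 := hεle i hiT
            simp only [haF, hbF] at h2
            rw [if_pos hci, if_pos hci] at h2
            linarith
      have hexp1 : (inner ℝ l (w + ε • (w - u)) : ℝ)
          = (inner ℝ l w : ℝ) + ε * ((inner ℝ l w : ℝ) - (inner ℝ l u : ℝ)) := by
        rw [inner_add_right, inner_smul_right, inner_sub_right]
      have hgeq : qq L c i₀ u ≤ (inner ℝ l u : ℝ) := by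
        have h9 := hlu'
        rw [hexp1, hqlin i₀, ← hqqw] at h9
        nlinarith
      exact le_antisymm hle hgeq
    have hlbS' : lb ∈ Sset' L c Az i₀ A' B' :=
      htrick (Sum.inr (Az, i₀, A', B')) l hlS' hdistl
    have hσ : (inner ℝ lb w : ℝ) = (inner ℝ l w : ℝ) := by
      have := hlbS'.2 w hwW
      rw [this, hqqw]
    -- choose the scaling parameter t
    set Tba : Finset (Fin s) := Finset.univ.filter
      (fun i => (L i zb + c i * ρb = β i) ∧ ¬(L i z + c i * ρ = β i)) with hTba
    have hGneg : ∀ i ∈ Tba, L i d + c i * (inner ℝ lb d : ℝ) < 0 := by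
      intro i hi
      rw [hTba, Finset.mem_filter] at hi
      exact hGlt i hi.2.1 hi.2.2
    obtain ⟨t, ht, htle⟩ := exists_t_le Tba
      (fun i => L i w + c i * (inner ℝ lb w : ℝ))
      (fun i => L i d + c i * (inner ℝ lb d : ℝ)) hGneg
    have hexpand : ∀ (i : Fin s) (x : EuclideanSpace ℝ (Fin m)),
        L i (x + t • d) + c i * (inner ℝ lb (x + t • d) : ℝ)
          = (L i x + c i * (inner ℝ lb x : ℝ)) + t * (L i d + c i * (inner ℝ lb d : ℝ)) := by
      intro i x
      rw [map_add, map_smul, smul_eq_mul, inner_add_right, inner_smul_right]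
      ring
    refine ⟨w + t • d, ?_, t • d, ?_, by abel⟩
    · rw [kchar g L c β hepi hbot hcle hρb lb _]
      constructor
      · intro i hactb
        rw [hexpand i w]
        by_cases hia : L i z + c i * ρ = β i
        · rw [hGz i hia, mul_zero, add_zero, hσ]
          exact hall i hia
        · exact htle i (by rw [hTba, Finset.mem_filter]; exact ⟨Finset.mem_univ _, hactb, hia⟩)
      · refine ⟨i₀, hAsub i₀ hact₀, hc₀, ?_⟩
        rw [hexpand i₀ w, hGz i₀ hact₀, mul_zero, add_zero, hσ]
        exact heq₀
    · rw [kchar g L c β hepi hbot hcle hρb lb _]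
      have hexpand0 : ∀ i : Fin s,
          L i (t • d) + c i * (inner ℝ lb (t • d) : ℝ) = t * (L i d + c i * (inner ℝ lb d : ℝ)) := by
        intro i
        rw [map_smul, smul_eq_mul, inner_smul_right]
        ring
      constructor
      · intro i hactb
        rw [hexpand0 i]
        by_cases hia : L i z + c i * ρ = β i
        · rw [hGz i hia, mul_zero]
        · have := hGlt i hactb hia
          exact mul_nonpos_of_nonneg_of_nonpos ht.le this.le
      · exact ⟨i₁, hAsub i₁ hi₁act, hi₁c, by rw [hexpand0 i₁, hGz i₁ hi₁act, mul_zero]⟩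
  · -- inclusion (ii)
    intro w hw
    obtain ⟨hw1, hw2⟩ := hw
    have hw2' : -w ∈ Kcone g zb lb := hw2
    rw [kchar g L c β hepi hbot hcle hρb lb w] at hw1
    rw [kchar g L c β hepi hbot hcle hρb lb (-w)] at hw2'
    obtain ⟨hall1, -⟩ := hw1
    obtain ⟨hall2, -⟩ := hw2'
    have hE0 : ∀ i, L i zb + c i * ρb = β i → L i w + c i * (inner ℝ lb w : ℝ) = 0 := by
      intro i hact
      have h1 := hall1 i hact
      have h2 := hall2 i hact
      rw [map_neg, inner_neg_right] at h2
      linarith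
    have hle1 : (inner ℝ l w : ℝ) ≤ (inner ℝ lb w : ℝ) := by
      refine subgrad_le g L c β hepi hρ hsub w _ ?_
      intro i hact
      exact le_of_eq (hE0 i (hAsub i hact))
    have hle2 : (inner ℝ l (-w) : ℝ) ≤ (inner ℝ lb (-w) : ℝ) := by
      refine subgrad_le g L c β hepi hρ hsub (-w) _ ?_
      intro i hact
      rw [map_neg, inner_neg_right]
      have := hE0 i (hAsub i hact)
      linarith
    have hinner : (inner ℝ l w : ℝ) = (inner ℝ lb w : ℝ) := by
      rw [inner_neg_right, inner_neg_right] at hle2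
      linarith
    rw [kchar g L c β hepi hbot hcle hρ l w]
    constructor
    · intro i hact
      rw [hinner]
      exact le_of_eq (hE0 i (hAsub i hact))
    · exact ⟨i₁, hi₁act, hi₁c, by rw [hinner]; exact hE0 i₁ (hAsub i₁ hi₁act)⟩
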